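/- (Example A) Let 0 < r_1 < r_2 < r_3 < r_4. At the shortest parade α_1 = α_2 = α_3 = α_4 = 0 (signed coordinates x_i = r_i), the Hessian matrix of L with respect to (α_1, α_2, α_3) is positive definite; hence the shortest parade is a nondegenerate local minimum of L (Morse index 0). -/

import Mathlib

open Real

/-- Length of the chordal segment between points at radii `r`, `r'` whose polar angles
differ by `θ`. -/
noncomputable def ell (r r' θ : ℝ) : ℝ :=
  Real.sqrt (r ^ 2 + r' ^ 2 - 2 * r * r' * Real.cos θ)

/-- The perimeter of the connecting cycle for four concentric circles of radii
`r1, r2, r3, r4`, as a function of the polar angles `a1, a2, a3` of the first three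
vertices, the fourth angle being fixed to `0`. -/
noncomputable def L4 (r1 r2 r3 r4 : ℝ) (a1 a2 a3 : ℝ) : ℝ :=
  ell r1 r2 (a2 - a1) + ell r2 r3 (a3 - a2) + ell r3 r4 (0 - a3) + ell r4 r1 (a1 - 0)

/-- Partial derivative in the first of three variables. -/
noncomputable def pd1 (f : ℝ → ℝ → ℝ → ℝ) (a b c : ℝ) : ℝ := deriv (fun x => f x b c) a

/-- Partial derivative in the second of three variables. -/
noncomputable def pd2 (f : ℝ → ℝ → ℝ → ℝ) (a b c : ℝ) : ℝ := deriv (fun y => f a y c) b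

/-- Partial derivative in the third of three variables. -/
noncomputable def pd3 (f : ℝ → ℝ → ℝ → ℝ) (a b c : ℝ) : ℝ := deriv (fun z => f a b z) c

/-- The Hessian matrix of `L4 r1 r2 r3 r4` at `(a, b, c)` in the reduced coordinates
`(α₁, α₂, α₃)`. -/
noncomputable def hess4 (r1 r2 r3 r4 a b c : ℝ) : Matrix (Fin 3) (Fin 3) ℝ :=
  !![pd1 (pd1 (L4 r1 r2 r3 r4)) a b c, pd1 (pd2 (L4 r1 r2 r3 r4)) a b c,
       pd1 (pd3 (L4 r1 r2 r3 r4)) a b c;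
     pd2 (pd1 (L4 r1 r2 r3 r4)) a b c, pd2 (pd2 (L4 r1 r2 r3 r4)) a b c,
       pd2 (pd3 (L4 r1 r2 r3 r4)) a b c;
     pd3 (pd1 (L4 r1 r2 r3 r4)) a b c, pd3 (pd2 (L4 r1 r2 r3 r4)) a b c,
       pd3 (pd3 (L4 r1 r2 r3 r4)) a b c]

lemma ell_rad_pos {r r' : ℝ} (hr : 0 < r) (hlt : r < r') (θ : ℝ) :
    0 < r ^ 2 + r' ^ 2 - 2 * r * r' * Real.cos θ := by
  nlinarith [Real.cos_le_one θ, mul_pos hr (hr.trans hlt),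
    mul_pos (sub_pos.mpr hlt) (sub_pos.mpr hlt)]

lemma ell_pos {r r' : ℝ} (hr : 0 < r) (hlt : r < r') (θ : ℝ) : 0 < ell r r' θ :=
  Real.sqrt_pos.mpr (ell_rad_pos hr hlt θ)

lemma ell_zero {r r' : ℝ} (hr : 0 < r) (hlt : r < r') : ell r r' 0 = r' - r := by
  rw [ell, Real.cos_zero, show r ^ 2 + r' ^ 2 - 2 * r * r' * 1 = (r' - r) ^ 2 by ring,
    Real.sqrt_sq (by linarith)]

lemma ell_comm (r r' θ : ℝ) : ell r r' θ = ell r' r θ := by unfold ell; ring_nf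

noncomputable def fd (r r' θ : ℝ) : ℝ := r * r' * Real.sin θ / ell r r' θ

lemma hasDerivAt_ell {r r' : ℝ} (hr : 0 < r) (hlt : r < r') (θ : ℝ) :
    HasDerivAt (fun t => ell r r' t) (fd r r' θ) θ := by
  have hu : HasDerivAt (fun t => r ^ 2 + r' ^ 2 - 2 * r * r' * Real.cos t)
      (2 * r * r' * Real.sin θ) θ := by
    simpa using ((Real.hasDerivAt_cos θ).const_mul (2 * r * r')).const_sub (r ^ 2 + r' ^ 2)
  have h := hu.sqrt (ne_of_gt (ell_rad_pos hr hlt θ))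
  have hne : ell r r' θ ≠ 0 := ne_of_gt (ell_pos hr hlt θ)
  refine h.congr_deriv ?_
  unfold fd ell
  rw [show (2:ℝ) * r * r' * Real.sin θ = 2 * (r * r' * Real.sin θ) by ring,
    mul_div_mul_left _ _ two_ne_zero]

lemma hasDerivAt_fd0 {r r' : ℝ} (hr : 0 < r) (hlt : r < r') :
    HasDerivAt (fd r r') (r * r' / (r' - r)) 0 := by
  have hnum : HasDerivAt (fun t => r * r' * Real.sin t) (r * r' * Real.cos 0) 0 :=
    (Real.hasDerivAt_sin 0).const_mul (r * r')
  have hden := hasDerivAt_ell hr hlt 0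
  have hne : ell r r' 0 ≠ 0 := ne_of_gt (ell_pos hr hlt 0)
  have h := hnum.div hden hne
  have hz : fd r r' 0 = 0 := by simp [fd]
  have he0 : ell r r' 0 = r' - r := ell_zero hr hlt
  have hne' : r' - r ≠ 0 := sub_ne_zero.mpr hlt.ne'
  refine h.congr_deriv ?_
  rw [hz, he0, Real.cos_zero, Real.sin_zero]
  field_simp
  ring

lemma hasDerivAt_comp_sub_right {g : ℝ → ℝ} {k : ℝ} (x c : ℝ)
    (hg : HasDerivAt g k (x - c)) : HasDerivAt (fun y => g (y - c)) k x := by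
  exact hg.comp_sub_const x c

lemma hasDerivAt_comp_const_sub {g : ℝ → ℝ} {k : ℝ} (x c : ℝ)
    (hg : HasDerivAt g k (c - x)) : HasDerivAt (fun y => g (c - y)) (-k) x := by
  exact hg.comp_const_sub c x

lemma aux_posdef {a b c d : ℝ} (ha : 0 < a) (hb : 0 < b) (hc : 0 < c) (hd : 0 < d) :
    (!![d + a, -a, 0; -a, a + b, -b; 0, -b, b + c] : Matrix (Fin 3) (Fin 3) ℝ).PosDef := by
  refine Matrix.posDef_iff_dotProduct_mulVec.mpr ⟨?_, fun x hx => ?_⟩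
  · ext i j
    fin_cases i <;> fin_cases j <;>
      simp [Matrix.conjTranspose_apply]
  · have hcomp : x 0 ≠ 0 ∨ x 1 ≠ 0 ∨ x 2 ≠ 0 := by
      by_contra h
      push_neg at h
      exact hx (by ext i; fin_cases i <;> simp [h.1, h.2.1, h.2.2])
    have hq : dotProduct (star x)
        (Matrix.mulVec (!![d + a, -a, 0; -a, a + b, -b; 0, -b, b + c]
          : Matrix (Fin 3) (Fin 3) ℝ) x)
        = d * x 0 ^ 2 + a * (x 0 - x 1) ^ 2 + b * (x 1 - x 2) ^ 2 + c * x 2 ^ 2 := by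
      simp [Matrix.mulVec, dotProduct, Fin.sum_univ_three, Matrix.cons_val_zero,
        Matrix.cons_val_one, Matrix.head_cons, Matrix.cons_val_two, Matrix.tail_cons]
      ring
    rw [hq]
    rcases hcomp with h0 | h1 | h2
    · have hs : 0 < x 0 ^ 2 := by positivity
      nlinarith [mul_pos hd hs, mul_nonneg ha.le (sq_nonneg (x 0 - x 1)),
        mul_nonneg hb.le (sq_nonneg (x 1 - x 2)), mul_nonneg hc.le (sq_nonneg (x 2))]
    · rcases eq_or_ne (x 0) 0 with h0 | h0
      · have hne : x 0 - x 1 ≠ 0 := by rw [h0]; simpa using h1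
        have hs : 0 < (x 0 - x 1) ^ 2 := by positivity
        nlinarith [mul_pos ha hs, mul_nonneg hd.le (sq_nonneg (x 0)),
          mul_nonneg hb.le (sq_nonneg (x 1 - x 2)), mul_nonneg hc.le (sq_nonneg (x 2))]
      · have hs : 0 < x 0 ^ 2 := by positivity
        nlinarith [mul_pos hd hs, mul_nonneg ha.le (sq_nonneg (x 0 - x 1)),
          mul_nonneg hb.le (sq_nonneg (x 1 - x 2)), mul_nonneg hc.le (sq_nonneg (x 2))]
    · have hs : 0 < x 2 ^ 2 := by positivity
      nlinarith [mul_pos hc hs, mul_nonneg ha.le (sq_nonneg (x 0 - x 1)),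
        mul_nonneg hb.le (sq_nonneg (x 1 - x 2)), mul_nonneg hd.le (sq_nonneg (x 0))]

/-- Example A: for `0 < r1 < r2 < r3 < r4` the Hessian of the perimeter at
the shortest parade `α₁ = α₂ = α₃ = α₄ = 0` is positive definite; hence the shortest
parade is a nondegenerate local minimum of the perimeter (Morse index 0). -/
theorem stmt_18 (r1 r2 r3 r4 : ℝ) (h1 : 0 < r1) (h12 : r1 < r2) (h23 : r2 < r3)
    (h34 : r3 < r4) :
    (hess4 r1 r2 r3 r4 0 0 0).PosDef ∧
    IsLocalMin (fun q : ℝ × ℝ × ℝ => L4 r1 r2 r3 r4 q.1 q.2.1 q.2.2) (0, 0, 0) := by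
  have hr2 : 0 < r2 := h1.trans h12
  have hr3 : 0 < r3 := hr2.trans h23
  have hr4 : 0 < r4 := hr3.trans h34
  have h14 : r1 < r4 := h12.trans (h23.trans h34)
  have hk12 : 0 < r1 * r2 / (r2 - r1) := div_pos (mul_pos h1 hr2) (sub_pos.mpr h12)
  have hk23 : 0 < r2 * r3 / (r3 - r2) := div_pos (mul_pos hr2 hr3) (sub_pos.mpr h23)
  have hk34 : 0 < r3 * r4 / (r4 - r3) := div_pos (mul_pos hr3 hr4) (sub_pos.mpr h34)
  have hk14 : 0 < r1 * r4 / (r4 - r1) := div_pos (mul_pos h1 hr4) (sub_pos.mpr h14)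
  have hLrw : L4 r1 r2 r3 r4 = fun a b c =>
      ell r1 r2 (b - a) + ell r2 r3 (c - b) + ell r3 r4 (0 - c) + ell r1 r4 (a - 0) := by
    funext a b c
    simp only [L4, ell_comm r4 r1]
  -- first partial derivatives
  have hpd1 : ∀ a b c : ℝ, pd1 (L4 r1 r2 r3 r4) a b c
      = fd r1 r4 (a - 0) - fd r1 r2 (b - a) := by
    intro a b c
    have t1 : HasDerivAt (fun x => ell r1 r2 (b - x)) (-(fd r1 r2 (b - a))) a :=
      hasDerivAt_comp_const_sub a b (hasDerivAt_ell h1 h12 (b - a))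
    have t4 : HasDerivAt (fun x => ell r1 r4 (x - 0)) (fd r1 r4 (a - 0)) a :=
      hasDerivAt_comp_sub_right a 0 (hasDerivAt_ell h1 h14 (a - 0))
    have h := ((t1.add_const (ell r2 r3 (c - b))).add_const (ell r3 r4 (0 - c))).add t4
    have h' : HasDerivAt (fun x => L4 r1 r2 r3 r4 x b c)
        (fd r1 r4 (a - 0) - fd r1 r2 (b - a)) a := by
      rw [hLrw]
      refine h.congr_deriv ?_; ring
    exact h'.deriv
  have hpd2 : ∀ a b c : ℝ, pd2 (L4 r1 r2 r3 r4) a b c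
      = fd r1 r2 (b - a) - fd r2 r3 (c - b) := by
    intro a b c
    have t1 : HasDerivAt (fun y => ell r1 r2 (y - a)) (fd r1 r2 (b - a)) b :=
      hasDerivAt_comp_sub_right b a (hasDerivAt_ell h1 h12 (b - a))
    have t2 : HasDerivAt (fun y => ell r2 r3 (c - y)) (-(fd r2 r3 (c - b))) b :=
      hasDerivAt_comp_const_sub b c (hasDerivAt_ell hr2 h23 (c - b))
    have h := ((t1.add t2).add_const (ell r3 r4 (0 - c))).add_const (ell r1 r4 (a - 0))
    have h' : HasDerivAt (fun y => L4 r1 r2 r3 r4 a y c)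
        (fd r1 r2 (b - a) - fd r2 r3 (c - b)) b := by
      rw [hLrw]
      refine h.congr_deriv ?_; ring
    exact h'.deriv
  have hpd3 : ∀ a b c : ℝ, pd3 (L4 r1 r2 r3 r4) a b c
      = fd r2 r3 (c - b) - fd r3 r4 (0 - c) := by
    intro a b c
    have t2 : HasDerivAt (fun z => ell r2 r3 (z - b)) (fd r2 r3 (c - b)) c :=
      hasDerivAt_comp_sub_right c b (hasDerivAt_ell hr2 h23 (c - b))
    have t3 : HasDerivAt (fun z => ell r3 r4 (0 - z)) (-(fd r3 r4 (0 - c))) c :=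
      hasDerivAt_comp_const_sub c 0 (hasDerivAt_ell hr3 h34 (0 - c))
    have h := (((t2.const_add (ell r1 r2 (b - a))).add t3).add_const (ell r1 r4 (a - 0)))
    have h' : HasDerivAt (fun z => L4 r1 r2 r3 r4 a b z)
        (fd r2 r3 (c - b) - fd r3 r4 (0 - c)) c := by
      rw [hLrw]
      refine h.congr_deriv ?_; ring
    exact h'.deriv
  -- derivative building blocks at 0
  have d12r : HasDerivAt (fun x : ℝ => fd r1 r2 (x - 0)) (r1 * r2 / (r2 - r1)) 0 :=
    hasDerivAt_comp_sub_right 0 0 (by simpa using hasDerivAt_fd0 h1 h12)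
  have d12l : HasDerivAt (fun x : ℝ => fd r1 r2 (0 - x)) (-(r1 * r2 / (r2 - r1))) 0 :=
    hasDerivAt_comp_const_sub 0 0 (by simpa using hasDerivAt_fd0 h1 h12)
  have d23r : HasDerivAt (fun x : ℝ => fd r2 r3 (x - 0)) (r2 * r3 / (r3 - r2)) 0 :=
    hasDerivAt_comp_sub_right 0 0 (by simpa using hasDerivAt_fd0 hr2 h23)
  have d23l : HasDerivAt (fun x : ℝ => fd r2 r3 (0 - x)) (-(r2 * r3 / (r3 - r2))) 0 :=
    hasDerivAt_comp_const_sub 0 0 (by simpa using hasDerivAt_fd0 hr2 h23)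
  have d34l : HasDerivAt (fun x : ℝ => fd r3 r4 (0 - x)) (-(r3 * r4 / (r4 - r3))) 0 :=
    hasDerivAt_comp_const_sub 0 0 (by simpa using hasDerivAt_fd0 hr3 h34)
  have d14r : HasDerivAt (fun x : ℝ => fd r1 r4 (x - 0)) (r1 * r4 / (r4 - r1)) 0 :=
    hasDerivAt_comp_sub_right 0 0 (by simpa using hasDerivAt_fd0 h1 h14)
  -- Hessian entries
  have e00 : pd1 (pd1 (L4 r1 r2 r3 r4)) 0 0 0
      = r1 * r4 / (r4 - r1) + r1 * r2 / (r2 - r1) := by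
    show deriv (fun x => pd1 (L4 r1 r2 r3 r4) x 0 0) 0 = _
    simp only [hpd1]
    exact (d14r.sub d12l).deriv.trans (by ring)
  have e01 : pd1 (pd2 (L4 r1 r2 r3 r4)) 0 0 0 = -(r1 * r2 / (r2 - r1)) := by
    show deriv (fun x => pd2 (L4 r1 r2 r3 r4) x 0 0) 0 = _
    simp only [hpd2]
    rw [(d12l.sub_const (fd r2 r3 (0 - 0))).deriv]
  have e02 : pd1 (pd3 (L4 r1 r2 r3 r4)) 0 0 0 = 0 := by
    show deriv (fun x => pd3 (L4 r1 r2 r3 r4) x 0 0) 0 = _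
    simp only [hpd3]
    exact deriv_const _ _
  have e10 : pd2 (pd1 (L4 r1 r2 r3 r4)) 0 0 0 = -(r1 * r2 / (r2 - r1)) := by
    show deriv (fun y => pd1 (L4 r1 r2 r3 r4) 0 y 0) 0 = _
    simp only [hpd1]
    exact ((hasDerivAt_const 0 (fd r1 r4 (0 - 0))).sub d12r).deriv.trans (by ring)
  have e11 : pd2 (pd2 (L4 r1 r2 r3 r4)) 0 0 0
      = r1 * r2 / (r2 - r1) + r2 * r3 / (r3 - r2) := by
    show deriv (fun y => pd2 (L4 r1 r2 r3 r4) 0 y 0) 0 = _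
    simp only [hpd2]
    exact (d12r.sub d23l).deriv.trans (by ring)
  have e12 : pd2 (pd3 (L4 r1 r2 r3 r4)) 0 0 0 = -(r2 * r3 / (r3 - r2)) := by
    show deriv (fun y => pd3 (L4 r1 r2 r3 r4) 0 y 0) 0 = _
    simp only [hpd3]
    rw [(d23l.sub_const (fd r3 r4 (0 - 0))).deriv]
  have e20 : pd3 (pd1 (L4 r1 r2 r3 r4)) 0 0 0 = 0 := by
    show deriv (fun z => pd1 (L4 r1 r2 r3 r4) 0 0 z) 0 = _
    simp only [hpd1]
    exact deriv_const _ _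
  have e21 : pd3 (pd2 (L4 r1 r2 r3 r4)) 0 0 0 = -(r2 * r3 / (r3 - r2)) := by
    show deriv (fun z => pd2 (L4 r1 r2 r3 r4) 0 0 z) 0 = _
    simp only [hpd2]
    exact ((hasDerivAt_const 0 (fd r1 r2 (0 - 0))).sub d23r).deriv.trans (by ring)
  have e22 : pd3 (pd3 (L4 r1 r2 r3 r4)) 0 0 0
      = r2 * r3 / (r3 - r2) + r3 * r4 / (r4 - r3) := by
    show deriv (fun z => pd3 (L4 r1 r2 r3 r4) 0 0 z) 0 = _
    simp only [hpd3]
    exact (d23r.sub d34l).deriv.trans (by ring)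
  have hmat : hess4 r1 r2 r3 r4 0 0 0 =
      !![r1 * r4 / (r4 - r1) + r1 * r2 / (r2 - r1), -(r1 * r2 / (r2 - r1)), 0;
         -(r1 * r2 / (r2 - r1)), r1 * r2 / (r2 - r1) + r2 * r3 / (r3 - r2),
           -(r2 * r3 / (r3 - r2));
         0, -(r2 * r3 / (r3 - r2)), r2 * r3 / (r3 - r2) + r3 * r4 / (r4 - r3)] := by
    rw [hess4, e00, e01, e02, e10, e11, e12, e20, e21, e22]
  constructor
  · rw [hmat]
    exact aux_posdef hk12 hk23 hk34 hk14
  · -- global minimum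
    have hle : ∀ (r r' : ℝ), 0 < r → r < r' → ∀ θ, r' - r ≤ ell r r' θ := by
      intro r r' hr hlt θ
      have h2 : (r' - r) ^ 2 ≤ r ^ 2 + r' ^ 2 - 2 * r * r' * Real.cos θ := by
        nlinarith [Real.cos_le_one θ, mul_pos hr (hr.trans hlt)]
      calc r' - r = Real.sqrt ((r' - r) ^ 2) := (Real.sqrt_sq (by linarith)).symm
        _ ≤ ell r r' θ := Real.sqrt_le_sqrt h2
    have h0v : L4 r1 r2 r3 r4 0 0 0 = 2 * r4 - 2 * r1 := by
      rw [hLrw]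
      simp only [sub_zero, sub_self, zero_sub, neg_zero]
      rw [ell_zero h1 h12, ell_zero hr2 h23, ell_zero hr3 h34, ell_zero h1 h14]
      ring
    have hmin : ∀ q : ℝ × ℝ × ℝ,
        L4 r1 r2 r3 r4 0 0 0 ≤ L4 r1 r2 r3 r4 q.1 q.2.1 q.2.2 := by
      intro q
      rw [h0v, hLrw]
      have b1 := hle r1 r2 h1 h12 (q.2.1 - q.1)
      have b2 := hle r2 r3 hr2 h23 (q.2.2 - q.2.1)
      have b3 := hle r3 r4 hr3 h34 (0 - q.2.2)
      have b4 := hle r1 r4 h1 h14 (q.1 - 0)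
      dsimp only
      linarith
    exact Filter.Eventually.of_forall hmin
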